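/- Let p ∈ (0,1), r ≥ 1 with p/r ∈ (0,1), and consider the optimization of E[v·Z·g(Z)] over measurable g : ℝ → [0, r] with E[g(Z)] = p for Z ~ N(0,1); the maximizer is g*(z) = r·1_{z > Φ⁻¹(1 − p/r)} and the optimal value equals (r/√(2π))·exp(−Φ⁻¹(p/r)²/2). -/

import Mathlib

open MeasureTheory ProbabilityTheory

/-- The standard Gaussian cumulative distribution function. -/
noncomputable def stdGaussianCDF (x : ℝ) : ℝ :=
  (gaussianReal 0 1 (Set.Iic x)).toReal

/-- The standard Gaussian quantile function `Φ⁻¹`. -/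
noncomputable def stdGaussianQuantile : ℝ → ℝ :=
  Function.invFun stdGaussianCDF

namespace NPaux

open Real Set Filter
open scoped ENNReal NNReal

noncomputable def phi (z : ℝ) : ℝ := (Real.sqrt (2 * π))⁻¹ * Real.exp (-z ^ 2 / 2)

lemma phi_eq : phi = gaussianPDFReal 0 1 := by
  ext z; simp [phi, gaussianPDFReal]

lemma phi_pos (z : ℝ) : 0 < phi z := by
  rw [phi_eq]; exact gaussianPDFReal_pos 0 1 z one_ne_zero

lemma phi_neg (z : ℝ) : phi (-z) = phi z := by simp [phi]

lemma continuous_phi : Continuous phi := by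
  unfold phi; fun_prop

lemma phi_integrable : Integrable phi := phi_eq ▸ integrable_gaussianPDFReal 0 1

lemma integral_phi : ∫ z, phi z = 1 := by
  rw [phi_eq]; exact integral_gaussianPDFReal_eq_one 0 one_ne_zero

lemma integral_gaussianReal_eq (f : ℝ → ℝ) :
    ∫ z, f z ∂(gaussianReal 0 1) = ∫ z, phi z * f z := by
  rw [gaussianReal_of_var_ne_zero 0 one_ne_zero]
  have h : (gaussianPDF 0 1) = fun x => ((gaussianPDFReal 0 1 x).toNNReal : ℝ≥0∞) := by
    ext x; simp [gaussianPDF, ENNReal.ofReal]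
  rw [h, integral_withDensity_eq_integral_smul
    ((measurable_gaussianPDFReal 0 1).real_toNNReal :
      Measurable fun x => (gaussianPDFReal 0 1 x).toNNReal)]
  congr 1; ext x
  simp [NNReal.smul_def, Real.coe_toNNReal _ (gaussianPDFReal_nonneg 0 1 x), phi_eq]

lemma id_mul_phi_integrable : Integrable (fun z => z * phi z) := by
  have h := (integrable_mul_exp_neg_mul_sq (b := 1/2) (by norm_num)).const_mul
    ((Real.sqrt (2 * π))⁻¹)
  refine h.congr (Filter.Eventually.of_forall fun z => ?_)
  have e : -(1/2:ℝ) * z ^ 2 = -z ^ 2 / 2 := by ring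
  simp only [e, phi]
  ring

lemma cdf_eq (x : ℝ) : stdGaussianCDF x = ∫ z in Iic x, phi z := by
  rw [stdGaussianCDF, gaussianReal_apply_eq_integral 0 one_ne_zero,
    ENNReal.toReal_ofReal (setIntegral_nonneg measurableSet_Iic
      fun z _ => gaussianPDFReal_nonneg 0 1 z), phi_eq]

lemma cdf_sub (a b : ℝ) :
    stdGaussianCDF b - stdGaussianCDF a = ∫ z in a..b, phi z := by
  rw [cdf_eq, cdf_eq]
  exact intervalIntegral.integral_Iic_sub_Iic phi_integrable.integrableOn
    phi_integrable.integrableOn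

lemma continuous_cdf : Continuous stdGaussianCDF := by
  have h : stdGaussianCDF = fun b => stdGaussianCDF 0 + ∫ z in (0:ℝ)..b, phi z := by
    funext b; have := cdf_sub 0 b; linarith
  rw [h]
  exact continuous_const.add (phi_integrable.continuous_primitive 0)

lemma strictMono_cdf : StrictMono stdGaussianCDF := by
  intro a b hab
  have h : 0 < ∫ z in a..b, phi z :=
    intervalIntegral.intervalIntegral_pos_of_pos
      phi_integrable.intervalIntegrable phi_pos hab
  have := cdf_sub a b; linarith

lemma cdf_eq_cdf : stdGaussianCDF = cdf (gaussianReal 0 1) := by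
  funext x; rw [cdf_eq_real]; rfl

lemma exists_cdf_eq {q : ℝ} (hq : q ∈ Ioo (0:ℝ) 1) : ∃ x, stdGaussianCDF x = q := by
  have hbot : Tendsto stdGaussianCDF atBot (nhds 0) := by
    rw [cdf_eq_cdf]; exact tendsto_cdf_atBot _
  have htop : Tendsto stdGaussianCDF atTop (nhds 1) := by
    rw [cdf_eq_cdf]; exact tendsto_cdf_atTop _
  obtain ⟨a, ha⟩ := (hbot.eventually (eventually_lt_nhds hq.1)).exists
  obtain ⟨b, hb⟩ := (htop.eventually (eventually_gt_nhds hq.2)).exists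
  have hab : a ≤ b := by
    by_contra hba
    exact absurd (strictMono_cdf (lt_of_not_ge hba)) (by linarith)
  obtain ⟨x, _, hx⟩ := intermediate_value_Icc hab continuous_cdf.continuousOn
    ⟨le_of_lt ha, le_of_lt hb⟩
  exact ⟨x, hx⟩

lemma cdf_quantile {q : ℝ} (hq : q ∈ Ioo (0:ℝ) 1) :
    stdGaussianCDF (stdGaussianQuantile q) = q :=
  Function.invFun_eq (exists_cdf_eq hq)

lemma quantile_unique {q x : ℝ} (hq : q ∈ Ioo (0:ℝ) 1) (h : stdGaussianCDF x = q) :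
    stdGaussianQuantile q = x :=
  strictMono_cdf.injective ((cdf_quantile hq).trans h.symm)

lemma int_phi_Ioi (t : ℝ) : ∫ z in Ioi t, phi z = 1 - stdGaussianCDF t := by
  have h := integral_add_compl (measurableSet_Iic (a := t)) phi_integrable
  rw [compl_Iic] at h
  rw [cdf_eq]
  have := integral_phi
  linarith

lemma cdf_neg (x : ℝ) : stdGaussianCDF (-x) = 1 - stdGaussianCDF x := by
  rw [cdf_eq, ← int_phi_Ioi x]
  calc ∫ z in Iic (-x), phi z = ∫ z in Iic (-x), phi (-z) := by
        apply setIntegral_congr_fun measurableSet_Iic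
        intro z _; exact (phi_neg z).symm
    _ = ∫ z in Ioi x, phi z := by rw [integral_comp_neg_Iic, neg_neg]

lemma quantile_one_sub {q : ℝ} (hq : q ∈ Ioo (0:ℝ) 1) :
    stdGaussianQuantile (1 - q) = - stdGaussianQuantile q := by
  refine quantile_unique ⟨by linarith [hq.2], by linarith [hq.1]⟩ ?_
  rw [cdf_neg, cdf_quantile hq]

lemma int_id_phi_Ioi (t : ℝ) : ∫ z in Ioi t, z * phi z = phi t := by
  have hd : ∀ x ∈ Ici t, HasDerivAt (fun z => -phi z) (x * phi x) x := by
    intro x _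
    have h1 : HasDerivAt (fun z : ℝ => -z ^ 2 / 2) (-x) x := by
      have := ((hasDerivAt_pow 2 x).neg).div_const 2
      simpa using this.congr_deriv (by ring)
    have h2 : HasDerivAt (fun z : ℝ => Real.exp (-z ^ 2 / 2))
        (Real.exp (-x ^ 2 / 2) * (-x)) x := h1.exp
    have h3 := (h2.const_mul ((Real.sqrt (2 * π))⁻¹)).neg
    refine h3.congr_deriv ?_
    simp only [phi]; ring
  have htend : Tendsto (fun z => -phi z) atTop (nhds 0) := by
    rw [show (0:ℝ) = -((Real.sqrt (2 * π))⁻¹ * 0) by ring]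
    refine Tendsto.neg (Tendsto.const_mul _ ?_)
    refine Real.tendsto_exp_atBot.comp ?_
    have h1 : Tendsto (fun z : ℝ => z ^ 2 / 2) atTop atTop :=
      (tendsto_pow_atTop two_ne_zero).atTop_div_const (by norm_num)
    have h2 : Tendsto (fun z : ℝ => -(z ^ 2 / 2)) atTop atBot :=
      tendsto_neg_atTop_atBot.comp h1
    exact h2.congr fun z => by ring
  have := integral_Ioi_of_hasDerivAt_of_tendsto
    ((continuous_phi.neg).continuousWithinAt) (fun x hx => hd x (Set.mem_Ici.mpr (le_of_lt hx)))
    id_mul_phi_integrable.integrableOn htend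
  rw [this, Pi.neg_apply]; ring

lemma integrable_phi_mul {r : ℝ} (hr : 0 ≤ r) {g : ℝ → ℝ} (hg : Measurable g)
    (hb : ∀ z, g z ∈ Icc 0 r) : Integrable (fun z => phi z * g z) := by
  refine Integrable.mono (phi_integrable.const_mul r)
    ((continuous_phi.measurable.mul hg).aestronglyMeasurable) ?_
  filter_upwards with z
  have h1 := (hb z).1; have h2 := (hb z).2; have h3 := (phi_pos z).le
  rw [Real.norm_eq_abs, Real.norm_eq_abs, abs_of_nonneg (by positivity),
    abs_of_nonneg (by positivity)]
  nlinarith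

lemma integrable_phi_mul_id {r : ℝ} (hr : 0 ≤ r) {g : ℝ → ℝ} (hg : Measurable g)
    (hb : ∀ z, g z ∈ Icc 0 r) : Integrable (fun z => phi z * (z * g z)) := by
  refine Integrable.mono (id_mul_phi_integrable.const_mul r)
    ((continuous_phi.measurable.mul (measurable_id.mul hg)).aestronglyMeasurable) ?_
  filter_upwards with z
  have h1 := (hb z).1; have h2 := (hb z).2; have h3 := (phi_pos z).le
  have e1 : |phi z * (z * g z)| = phi z * (|z| * g z) := by
    rw [abs_mul, abs_mul, abs_of_nonneg h3, abs_of_nonneg h1]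
  have e2 : |r * (z * phi z)| = r * (|z| * phi z) := by
    rw [abs_mul, abs_mul, abs_of_nonneg hr, abs_of_nonneg h3]
  rw [Real.norm_eq_abs, Real.norm_eq_abs, e1, e2]
  nlinarith [abs_nonneg z, mul_le_mul_of_nonneg_left h2 (mul_nonneg h3 (abs_nonneg z))]

end NPaux

open NPaux Real Set in
/-- Neyman–Pearson-type extremal problem: among measurable `g : ℝ → [0, r]` with
`E[g(Z)] = p` for `Z ~ N(0,1)`, the objective `E[Z g(Z)]` is maximized by
`g*(z) = r·1_{z > Φ⁻¹(1 − p/r)}`, with optimal value `(r/√(2π))·exp(−Φ⁻¹(p/r)²/2)`. -/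
theorem neyman_pearson_gaussian (p r : ℝ) (hp : p ∈ Set.Ioo (0 : ℝ) 1)
    (hr : 1 ≤ r) (hpr : p / r ∈ Set.Ioo (0 : ℝ) 1)
    (gstar : ℝ → ℝ)
    (hgstar : ∀ z, gstar z = if stdGaussianQuantile (1 - p / r) < z then r else 0) :
    (∀ g : ℝ → ℝ, Measurable g → (∀ z, g z ∈ Set.Icc 0 r) →
        (∫ z, g z ∂(gaussianReal 0 1)) = p →
        (∫ z, z * g z ∂(gaussianReal 0 1)) ≤
          (r / Real.sqrt (2 * Real.pi)) *
            Real.exp (-(stdGaussianQuantile (p / r)) ^ 2 / 2)) ∧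
      (∫ z, gstar z ∂(gaussianReal 0 1)) = p ∧
      (∫ z, z * gstar z ∂(gaussianReal 0 1)) =
        (r / Real.sqrt (2 * Real.pi)) *
          Real.exp (-(stdGaussianQuantile (p / r)) ^ 2 / 2) := by
  have hr0 : (0:ℝ) < r := lt_of_lt_of_le one_pos hr
  set t := stdGaussianQuantile (1 - p / r) with ht
  have hpr' : 1 - p / r ∈ Set.Ioo (0:ℝ) 1 := ⟨by linarith [hpr.2], by linarith [hpr.1]⟩
  have hΦt : stdGaussianCDF t = 1 - p / r := cdf_quantile hpr'
  have ht_neg : t = - stdGaussianQuantile (p / r) := quantile_one_sub hpr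
  have hval : r * phi t = (r / Real.sqrt (2 * Real.pi)) *
      Real.exp (-(stdGaussianQuantile (p / r)) ^ 2 / 2) := by
    rw [ht_neg, phi_neg, phi]; ring
  -- gstar properties
  have hgstar_meas : Measurable gstar := by
    have : gstar = fun z => if t < z then r else 0 := funext hgstar
    rw [this]
    exact Measurable.ite (measurableSet_Ioi (a := t)) measurable_const measurable_const
  have hgstar_mem : ∀ z, gstar z ∈ Set.Icc 0 r := by
    intro z; rw [hgstar]
    split <;> constructor <;> first | exact le_refl _ | positivity | linarith
  -- ∫ gstar = p
  have hgs_int1 : (∫ z, gstar z ∂(gaussianReal 0 1)) = p := by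
    rw [integral_gaussianReal_eq]
    have h1 : (fun z => phi z * gstar z) =
        (Ioi t).indicator (fun z => phi z * r) := by
      funext z
      rw [hgstar]
      by_cases hz : t < z
      · rw [if_pos hz]
        exact (Set.indicator_of_mem (Set.mem_Ioi.mpr hz) (fun z => phi z * r)).symm
      · rw [if_neg hz, mul_zero]
        exact (Set.indicator_of_notMem (fun h => hz (Set.mem_Ioi.mp h))
          (fun z => phi z * r)).symm
    rw [h1, integral_indicator measurableSet_Ioi]
    have h2 : ∫ z in Ioi t, phi z * r = r * ∫ z in Ioi t, phi z := by
      rw [← integral_const_mul]; congr 1; funext z; ring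
    rw [h2, int_phi_Ioi, hΦt]
    field_simp
    ring
  -- ∫ z gstar = value
  have hgs_int2 : (∫ z, z * gstar z ∂(gaussianReal 0 1)) = r * phi t := by
    rw [integral_gaussianReal_eq]
    have h1 : (fun z => phi z * (z * gstar z)) =
        (Ioi t).indicator (fun z => r * (z * phi z)) := by
      funext z
      rw [hgstar]
      by_cases hz : t < z
      · rw [if_pos hz, Set.indicator_of_mem (Set.mem_Ioi.mpr hz)]; ring
      · rw [if_neg hz, Set.indicator_of_notMem (fun h => hz (Set.mem_Ioi.mp h))]; ring
    rw [h1, integral_indicator measurableSet_Ioi, integral_const_mul, int_id_phi_Ioi]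
  refine ⟨?_, hgs_int1, hgs_int2.trans hval⟩
  -- optimality
  intro g hg hgb hgp
  rw [integral_gaussianReal_eq] at hgp ⊢
  rw [← hval]
  have hI1 : Integrable (fun z => phi z * (z * gstar z)) :=
    integrable_phi_mul_id hr0.le hgstar_meas hgstar_mem
  have hI2 : Integrable (fun z => phi z * (z * g z)) :=
    integrable_phi_mul_id hr0.le hg hgb
  have hI3 : Integrable (fun z => phi z * gstar z) :=
    integrable_phi_mul hr0.le hgstar_meas hgstar_mem
  have hI4 : Integrable (fun z => phi z * g z) :=
    integrable_phi_mul hr0.le hg hgb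
  have hpt : ∀ z, 0 ≤ (phi z * (z * gstar z) - phi z * (z * g z))
      - t * (phi z * gstar z - phi z * g z) := by
    intro z
    have hkey : (phi z * (z * gstar z) - phi z * (z * g z))
        - t * (phi z * gstar z - phi z * g z)
        = phi z * ((z - t) * (gstar z - g z)) := by ring
    rw [hkey]
    refine mul_nonneg (phi_pos z).le ?_
    rcases lt_or_ge t z with hz | hz
    · have h1 : gstar z = r := by rw [hgstar, if_pos hz]
      have := (hgb z).2
      nlinarith
    · have h1 : gstar z = 0 := by rw [hgstar, if_neg (not_lt.mpr hz)]
      have := (hgb z).1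
      nlinarith
  have h0 : 0 ≤ ∫ z, ((phi z * (z * gstar z) - phi z * (z * g z))
      - t * (phi z * gstar z - phi z * g z)) := integral_nonneg hpt
  have eA : ∫ z, (phi z * (z * gstar z) - phi z * (z * g z))
      = (∫ z, phi z * (z * gstar z)) - ∫ z, phi z * (z * g z) := integral_sub hI1 hI2
  have eB : ∫ z, t * (phi z * gstar z - phi z * g z)
      = t * ((∫ z, phi z * gstar z) - ∫ z, phi z * g z) := by
    rw [integral_const_mul]; congr 1; exact integral_sub hI3 hI4
  have eC : ∫ z, ((phi z * (z * gstar z) - phi z * (z * g z))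
      - t * (phi z * gstar z - phi z * g z))
      = (∫ z, (phi z * (z * gstar z) - phi z * (z * g z)))
      - ∫ z, t * (phi z * gstar z - phi z * g z) :=
    integral_sub (hI1.sub hI2) ((hI3.sub hI4).const_mul t)
  rw [eC, eA, eB] at h0
  have hP1 : (∫ z, phi z * gstar z) = p := by
    rw [← integral_gaussianReal_eq]; exact hgs_int1
  have hP2 : (∫ z, phi z * (z * gstar z)) = r * phi t := by
    rw [← integral_gaussianReal_eq]; exact hgs_int2
  rw [hP1, hP2, hgp] at h0
  linarith
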